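/- The Stanley sequence with seed {0, 1} consists exactly of the nonnegative integers whose base-3 representation uses only the digits 0 and 1; in particular its k-th term (k ≥ 0, zero-indexed) is obtained by writing k in binary and reading the result in base 3. -/

import Mathlib

/-- A set of naturals has no three-term arithmetic progression. -/
def ThreeAPFreeSet (S : Set ℕ) : Prop :=
  ∀ x ∈ S, ∀ y ∈ S, ∀ z ∈ S, x < y → y < z → x + z ≠ 2 * y

/-- `a` is the Stanley (greedy 3-AP-free) sequence with seed `{0, n}`:
`a 0 = 0`, `a 1 = n`, and for `k ≥ 2`, `a k` is the least `c > a (k-1)` such that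
adjoining `c` to the previously chosen terms keeps the set 3-AP-free. -/
def IsStanley (n : ℕ) (a : ℕ → ℕ) : Prop :=
  a 0 = 0 ∧ a 1 = n ∧
  ∀ k, 2 ≤ k →
    IsLeast {c | a (k - 1) < c ∧ ThreeAPFreeSet (insert c (a '' Set.Iio k))} (a k)

/-- Write  in binary and read the result in base 3. -/
def binToTer (k : ℕ) : ℕ := (Nat.digits 2 k).foldr (fun d acc => d + 3 * acc) 0

lemma bt_zero : binToTer 0 = 0 := by simp [binToTer]

lemma bt_rec (k : ℕ) : binToTer k = 3 * binToTer (k / 2) + k % 2 := by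
  rcases Nat.eq_zero_or_pos k with rfl | hk
  · simp [binToTer]
  · rw [binToTer, Nat.digits_def' (by norm_num) hk]
    simp [binToTer]; omega

lemma bt_strictMono : StrictMono binToTer := by
  have H : ∀ l k, k < l → binToTer k < binToTer l := by
    intro l
    induction l using Nat.strong_induction_on with
    | _ l IH =>
      intro k hkl
      rw [bt_rec k, bt_rec l]
      have h1 : k / 2 < l / 2 ∨ (k / 2 = l / 2 ∧ k % 2 < l % 2) := by omega
      rcases h1 with h | ⟨h, h'⟩
      · have := IH (l / 2) (by omega) (k / 2) h
        omega
      · rw [h]; omega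
  exact fun k l h => H l k h

lemma bt_pos {k : ℕ} (h : 0 < k) : 0 < binToTer k := by
  have := bt_strictMono h; rwa [bt_zero] at this

lemma bt_ter (k : ℕ) : ∀ d ∈ Nat.digits 3 (binToTer k), d ≤ 1 := by
  induction k using Nat.strong_induction_on with
  | _ k IH =>
    rcases Nat.eq_zero_or_pos k with rfl | hk
    · simp [bt_zero]
    · intro d hd
      rw [bt_rec k, Nat.digits_def' (by norm_num) (by have := bt_pos hk; rw [bt_rec k] at this; omega)] at hd
      have e1 : (3 * binToTer (k / 2) + k % 2) % 3 = k % 2 := by omega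
      have e2 : (3 * binToTer (k / 2) + k % 2) / 3 = binToTer (k / 2) := by omega
      rw [e1, e2] at hd
      rcases List.mem_cons.1 hd with rfl | hd
      · omega
      · exact IH (k / 2) (by omega) d hd

lemma bt_surj {m : ℕ} (hm : ∀ d ∈ Nat.digits 3 m, d ≤ 1) : ∃ k, binToTer k = m := by
  induction m using Nat.strong_induction_on with
  | _ m IH =>
    rcases Nat.eq_zero_or_pos m with rfl | hm0
    · exact ⟨0, bt_zero⟩
    · rw [Nat.digits_def' (by norm_num) hm0] at hm
      have h1 : m % 3 ≤ 1 := hm _ List.mem_cons_self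
      have h2 : ∀ d ∈ Nat.digits 3 (m / 3), d ≤ 1 := fun d hd => hm d (List.mem_cons_of_mem _ hd)
      obtain ⟨k, hk⟩ := IH (m / 3) (by omega) h2
      refine ⟨2 * k + m % 3, ?_⟩
      rw [bt_rec]
      have e1 : (2 * k + m % 3) / 2 = k := by omega
      have e2 : (2 * k + m % 3) % 2 = m % 3 := by omega
      rw [e1, e2, hk]; omega

lemma ter_tail {x : ℕ} (h : ∀ d ∈ Nat.digits 3 x, d ≤ 1) :
    x % 3 ≤ 1 ∧ ∀ d ∈ Nat.digits 3 (x / 3), d ≤ 1 := by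
  rcases Nat.eq_zero_or_pos x with rfl | hx
  · simp
  · rw [Nat.digits_def' (by norm_num) hx] at h
    exact ⟨h _ List.mem_cons_self, fun d hd => h d (List.mem_cons_of_mem _ hd)⟩

lemma noAP : ∀ y x z, (∀ d ∈ Nat.digits 3 x, d ≤ 1) → (∀ d ∈ Nat.digits 3 y, d ≤ 1) →
    (∀ d ∈ Nat.digits 3 z, d ≤ 1) → x + z = 2 * y → x = z := by
  intro y
  induction y using Nat.strong_induction_on with
  | _ y IH =>
    intro x z hx hy hz h
    rcases Nat.eq_zero_or_pos y with rfl | hy0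
    · omega
    obtain ⟨hx1, hx2⟩ := ter_tail hx
    obtain ⟨hy1, hy2⟩ := ter_tail hy
    obtain ⟨hz1, hz2⟩ := ter_tail hz
    have key : x % 3 + z % 3 = 2 * (y % 3) ∧ x / 3 + z / 3 = 2 * (y / 3) := by omega
    have := IH (y / 3) (by omega) (x / 3) (z / 3) hx2 hy2 hz2 key.2
    omega

lemma apfree_of_ter (S' : Set ℕ) (h : ∀ m ∈ S', ∀ d ∈ Nat.digits 3 m, d ≤ 1) :
    ThreeAPFreeSet S' := by
  intro x hx y hy z hz h1 h2 he
  have := noAP y x z (h x hx) (h y hy) (h z hz) he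
  omega

def cap3 (c : ℕ) : ℕ := (Nat.digits 3 c).foldr (fun d acc => min d 1 + 3 * acc) 0
def flo3 (c : ℕ) : ℕ := (Nat.digits 3 c).foldr (fun d acc => (if d = 2 then 0 else d) + 3 * acc) 0

lemma cap3_rec {c : ℕ} (h : 0 < c) : cap3 c = 3 * cap3 (c / 3) + min (c % 3) 1 := by
  rw [cap3, Nat.digits_def' (by norm_num) h]; simp [cap3]; omega

lemma flo3_rec {c : ℕ} (h : 0 < c) :
    flo3 c = 3 * flo3 (c / 3) + (if c % 3 = 2 then 0 else c % 3) := by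
  rw [flo3, Nat.digits_def' (by norm_num) h]; simp [flo3]; omega

lemma cap3_le (c : ℕ) : cap3 c ≤ c := by
  induction c using Nat.strong_induction_on with
  | _ c IH =>
    rcases Nat.eq_zero_or_pos c with rfl | hc
    · simp [cap3]
    · rw [cap3_rec hc]
      have := IH (c / 3) (by omega)
      omega

lemma flo3_add (c : ℕ) : flo3 c + c = 2 * cap3 c := by
  induction c using Nat.strong_induction_on with
  | _ c IH =>
    rcases Nat.eq_zero_or_pos c with rfl | hc
    · simp [cap3, flo3]
    · rw [cap3_rec hc, flo3_rec hc]
      have := IH (c / 3) (by omega)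
      have h3 : c % 3 < 3 := Nat.mod_lt _ (by norm_num)
      interval_cases h : c % 3 <;> simp <;> omega

lemma cap3_ter (c : ℕ) : ∀ d ∈ Nat.digits 3 (cap3 c), d ≤ 1 := by
  induction c using Nat.strong_induction_on with
  | _ c IH =>
    rcases Nat.eq_zero_or_pos c with rfl | hc
    · simp [cap3]
    · intro d hd
      rw [cap3_rec hc] at hd
      rcases Nat.eq_zero_or_pos (3 * cap3 (c / 3) + min (c % 3) 1) with h0 | h0
      · rw [h0] at hd; simp at hd
      · rw [Nat.digits_def' (by norm_num) h0] at hd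
        have e1 : (3 * cap3 (c / 3) + min (c % 3) 1) % 3 = min (c % 3) 1 := by omega
        have e2 : (3 * cap3 (c / 3) + min (c % 3) 1) / 3 = cap3 (c / 3) := by omega
        rw [e1, e2] at hd
        rcases List.mem_cons.1 hd with rfl | hd
        · omega
        · exact IH (c / 3) (by omega) d hd

lemma flo3_ter (c : ℕ) : ∀ d ∈ Nat.digits 3 (flo3 c), d ≤ 1 := by
  induction c using Nat.strong_induction_on with
  | _ c IH =>
    rcases Nat.eq_zero_or_pos c with rfl | hc
    · simp [flo3]
    · intro d hd
      rw [flo3_rec hc] at hd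
      set r := (if c % 3 = 2 then 0 else c % 3) with hr
      have hr1 : r ≤ 1 := by rw [hr]; split <;> omega
      rcases Nat.eq_zero_or_pos (3 * flo3 (c / 3) + r) with h0 | h0
      · rw [h0] at hd; simp at hd
      · rw [Nat.digits_def' (by norm_num) h0] at hd
        have e1 : (3 * flo3 (c / 3) + r) % 3 = r := by omega
        have e2 : (3 * flo3 (c / 3) + r) / 3 = flo3 (c / 3) := by omega
        rw [e1, e2] at hd
        rcases List.mem_cons.1 hd with rfl | hd
        · omega
        · exact IH (c / 3) (by omega) d hd

lemma cap3_lt {c : ℕ} (h : ¬ ∀ d ∈ Nat.digits 3 c, d ≤ 1) : cap3 c < c := by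
  induction c using Nat.strong_induction_on with
  | _ c IH =>
    push_neg at h
    obtain ⟨d, hd, hd2⟩ := h
    have hc : 0 < c := by
      rcases Nat.eq_zero_or_pos c with rfl | hc
      · simp at hd
      · exact hc
    rw [Nat.digits_def' (by norm_num) hc] at hd
    rw [cap3_rec hc]
    rcases List.mem_cons.1 hd with rfl | hd
    · have := cap3_le (c / 3); omega
    · have htail : ¬ ∀ d ∈ Nat.digits 3 (c / 3), d ≤ 1 := by push_neg; exact ⟨d, hd, hd2⟩
      have := IH (c / 3) (by omega) htail
      omega

lemma btIsLeast (k : ℕ) (hk : 1 ≤ k) :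
    IsLeast {c | binToTer (k - 1) < c ∧ ThreeAPFreeSet (insert c (binToTer '' Set.Iio k))}
      (binToTer k) := by
  constructor
  · constructor
    · exact bt_strictMono (by omega)
    · apply apfree_of_ter
      intro m hm
      rcases Set.mem_insert_iff.1 hm with rfl | ⟨j, _, rfl⟩
      · exact bt_ter k
      · exact bt_ter j
  · rintro c ⟨hc1, hc2⟩
    by_contra hlt
    push_neg at hlt
    have hter : ¬ ∀ d ∈ Nat.digits 3 c, d ≤ 1 := by
      intro hter
      obtain ⟨j, hj⟩ := bt_surj hter
      have h1 : k - 1 < j := by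
        have := bt_strictMono.lt_iff_lt (a := k - 1) (b := j); rw [hj] at this; omega
      have h2 : j < k := by
        have := bt_strictMono.lt_iff_lt (a := j) (b := k); rw [hj] at this; omega
      omega
    have hg : cap3 c < c := cap3_lt hter
    have hadd : flo3 c + c = 2 * cap3 c := flo3_add c
    have hfg : flo3 c < cap3 c := by omega
    have memf : flo3 c ∈ binToTer '' Set.Iio k := by
      obtain ⟨i, hi⟩ := bt_surj (flo3_ter c)
      refine ⟨i, ?_, hi⟩
      have := bt_strictMono.lt_iff_lt (a := i) (b := k); rw [hi] at this
      simp only [Set.mem_Iio]; omega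
    have memg : cap3 c ∈ binToTer '' Set.Iio k := by
      obtain ⟨i, hi⟩ := bt_surj (cap3_ter c)
      refine ⟨i, ?_, hi⟩
      have := bt_strictMono.lt_iff_lt (a := i) (b := k); rw [hi] at this
      simp only [Set.mem_Iio]; omega
    exact hc2 (flo3 c) (Set.mem_insert_of_mem _ memf) (cap3 c) (Set.mem_insert_of_mem _ memg)
      c (Set.mem_insert _ _) hfg hg hadd

theorem stanley_seed_0_1_eq_binToTer (a : ℕ → ℕ) (ha : IsStanley 1 a) :
    (∀ k, a k = binToTer k) ∧
      Set.range a = {m : ℕ | ∀ d ∈ Nat.digits 3 m, d ≤ 1} := by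
  obtain ⟨h0, h1, hk⟩ := ha
  have key : ∀ k, a k = binToTer k := by
    intro k
    induction k using Nat.strong_induction_on with
    | _ k IH =>
      match k with
      | 0 => rw [h0, bt_zero]
      | 1 => rw [h1, bt_rec 1, bt_zero]
      | (k + 2) =>
        have hset : a '' Set.Iio (k + 2) = binToTer '' Set.Iio (k + 2) :=
          Set.image_congr fun j hj => IH j hj
        have hL := hk (k + 2) (by omega)
        rw [show k + 2 - 1 = k + 1 from rfl, IH (k + 1) (by omega), hset] at hL
        exact hL.unique (btIsLeast (k + 2) (by omega))
  refine ⟨key, ?_⟩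
  have hr : Set.range a = Set.range binToTer := by
    ext m; simp only [Set.mem_range, key]
  rw [hr]
  ext m
  constructor
  · rintro ⟨k, rfl⟩; exact bt_ter k
  · intro hm; exact bt_surj hm
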